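/- Let π be a probability measure on {0,1}ⁿ with the stochastic covering property (SCP), and let Ω_0 = {x in the support : x_n = 0} and Ω_1 = {x in the support : x_n = 1}, both assumed nonempty, with conditional measures π_0 and π_1. Then there exists a coupling κ of π_0 and π_1 supported on pairs (x,y) with x ∈ Ω_0, y ∈ Ω_1 and x ∼ y, where x ∼ y means x and y differ by a single flip (y = x + e_j) or a single swap (y = x + e_j - e_k, j ≠ k). -/

import Mathlib

open Finset

/-- `u ▷ v` : `u` is obtained from `v` by raising at most one coordinate. -/
def coversConf {α : Type*} [DecidableEq α] (u v : α → Bool) : Prop :=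
  u = v ∨ ∃ i, v i = false ∧ u = Function.update v i true

/-- Lift of `▷` to (finitely supported) measures: there is a coupling supported on
`{(u, v) : u ▷ v}`. -/
def measCovers {α : Type*} [Fintype α] [DecidableEq α]
    (μ ν : (α → Bool) → ℝ) : Prop :=
  ∃ κ : (α → Bool) × (α → Bool) → ℝ,
    (∀ p, 0 ≤ κ p) ∧ (∀ u, ∑ v, κ (u, v) = μ u) ∧ (∀ v, ∑ u, κ (u, v) = ν v) ∧
    ∀ p, κ p ≠ 0 → coversConf p.1 p.2

/-- Mass of the conditioning event `X_S = x`. -/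
def condWeight {n : ℕ} (π : (Fin n → Bool) → ℝ) (S : Finset (Fin n))
    (x : {i // i ∈ S} → Bool) : ℝ :=
  ∑ z ∈ univ.filter (fun z : Fin n → Bool => ∀ i : {i // i ∈ S}, z i.1 = x i), π z

/-- Conditional law of the coordinates outside `S` given `X_S = x`. -/
noncomputable def condLaw {n : ℕ} (π : (Fin n → Bool) → ℝ) (S : Finset (Fin n))
    (x : {i // i ∈ S} → Bool) : ({i // i ∉ S} → Bool) → ℝ :=
  fun w =>
    (∑ z ∈ univ.filter (fun z : Fin n → Bool =>
        (∀ i : {i // i ∈ S}, z i.1 = x i) ∧ ∀ j : {i // i ∉ S}, z j.1 = w j), π z) /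
      condWeight π S x

/-- The stochastic covering property. -/
def SCP {n : ℕ} (π : (Fin n → Bool) → ℝ) : Prop :=
  ∀ S : Finset (Fin n), ∀ x y : {i // i ∈ S} → Bool,
    0 < condWeight π S x → 0 < condWeight π S y → coversConf x y →
      measCovers (condLaw π S y) (condLaw π S x)

/-- `x ∼ y` : `y` is obtained from `x` by a single flip up or a single swap. -/
def flipSwap {n : ℕ} (x y : Fin n → Bool) : Prop :=
  (∃ j, x j = false ∧ y = Function.update x j true) ∨
  (∃ j k, j ≠ k ∧ x j = false ∧ x k = true ∧
      y = Function.update (Function.update x j true) k false)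

namespace SCPaux

variable {n : ℕ}

def extFun (ℓ : Fin n) (b : Bool) (w : {i : Fin n // i ∉ ({ℓ} : Finset (Fin n))} → Bool) :
    Fin n → Bool :=
  fun i => if h : i ∈ ({ℓ} : Finset (Fin n)) then b else w ⟨i, h⟩

def resFun (ℓ : Fin n) (z : Fin n → Bool) :
    {i : Fin n // i ∉ ({ℓ} : Finset (Fin n))} → Bool :=
  fun j => z j.1

lemma extFun_self (ℓ : Fin n) (b w) : extFun ℓ b w ℓ = b := by
  simp [extFun]

lemma res_ext (ℓ : Fin n) (b w) : resFun ℓ (extFun ℓ b w) = w := by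
  funext j
  simp [resFun, extFun, j.2]

lemma ext_res (ℓ : Fin n) (b : Bool) (X : Fin n → Bool) (hb : X ℓ = b) :
    extFun ℓ b (resFun ℓ X) = X := by
  funext i
  by_cases h : i ∈ ({ℓ} : Finset (Fin n))
  · have hi : i = ℓ := Finset.mem_singleton.mp h
    subst hi
    simp [extFun, h, hb]
  · simp [extFun, h, resFun]

def splitEquiv (ℓ : Fin n) :
    (Bool × ({i : Fin n // i ∉ ({ℓ} : Finset (Fin n))} → Bool)) ≃ (Fin n → Bool) where
  toFun p := extFun ℓ p.1 p.2
  invFun z := (z ℓ, resFun ℓ z)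
  left_inv p := by simp [extFun_self, res_ext]
  right_inv z := ext_res ℓ (z ℓ) z rfl

lemma condWeight_const (π : (Fin n → Bool) → ℝ) (ℓ : Fin n) (b : Bool) :
    condWeight π {ℓ} (fun _ => b) =
      ∑ z ∈ univ.filter (fun z : Fin n → Bool => z ℓ = b), π z := by
  unfold condWeight
  congr 1
  apply Finset.filter_congr
  intro z _
  constructor
  · intro h; exact h ⟨ℓ, Finset.mem_singleton_self ℓ⟩
  · intro h i
    have hi : i.1 = ℓ := Finset.mem_singleton.mp i.2
    rw [hi]
    exact h

lemma condLaw_eval (π : (Fin n → Bool) → ℝ) (ℓ : Fin n) (b : Bool)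
    (X : Fin n → Bool) (hX : X ℓ = b) :
    condLaw π {ℓ} (fun _ => b) (resFun ℓ X) = π X / condWeight π {ℓ} (fun _ => b) := by
  unfold condLaw
  congr 1
  have hset : (univ.filter (fun z : Fin n → Bool =>
      (∀ i : {i // i ∈ ({ℓ} : Finset (Fin n))}, z i.1 = (fun _ => b) i) ∧
      ∀ j : {i // i ∉ ({ℓ} : Finset (Fin n))}, z j.1 = resFun ℓ X j)) = {X} := by
    ext z
    simp only [Finset.mem_filter, Finset.mem_univ, true_and, Finset.mem_singleton]
    constructor
    · rintro ⟨h1, h2⟩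
      funext i
      by_cases h : i ∈ ({ℓ} : Finset (Fin n))
      · have hi : i = ℓ := Finset.mem_singleton.mp h
        subst hi
        rw [h1 ⟨i, h⟩, hX]
      · exact h2 ⟨i, h⟩
    · rintro rfl
      exact ⟨fun i => by rw [Finset.mem_singleton.mp i.2, hX], fun j => rfl⟩
  rw [hset, Finset.sum_singleton]

end SCPaux
/-- Lemma 2.4: for an SCP measure, the conditionals `π_0, π_1` on `{x_ℓ = 0}` and
`{x_ℓ = 1}` can be coupled along flips and swaps. -/
theorem scp_coupling {n : ℕ} (π : (Fin n → Bool) → ℝ)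
    (hπ : ∀ x, 0 ≤ π x) (hπ1 : ∑ x, π x = 1) (hSCP : SCP π)
    (ℓ : Fin n) (Z0 Z1 : ℝ)
    (hZ0 : Z0 = ∑ x ∈ univ.filter (fun x : Fin n → Bool => x ℓ = false), π x)
    (hZ1 : Z1 = ∑ x ∈ univ.filter (fun x : Fin n → Bool => x ℓ = true), π x)
    (hZ0pos : 0 < Z0) (hZ1pos : 0 < Z1) :
    ∃ κ : (Fin n → Bool) × (Fin n → Bool) → ℝ,
      (∀ p, 0 ≤ κ p) ∧
      (∀ x, ∑ y, κ (x, y) = (if x ℓ = false then π x else 0) / Z0) ∧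
      (∀ y, ∑ x, κ (x, y) = (if y ℓ = true then π y else 0) / Z1) ∧
      ∀ x y, κ (x, y) ≠ 0 → x ℓ = false ∧ y ℓ = true ∧ flipSwap x y := by
  classical
  have hW0 : condWeight π {ℓ} (fun _ => false) = Z0 := by
    rw [SCPaux.condWeight_const, hZ0]
  have hW1 : condWeight π {ℓ} (fun _ => true) = Z1 := by
    rw [SCPaux.condWeight_const, hZ1]
  have hcov : coversConf (fun _ : {i // i ∈ ({ℓ} : Finset (Fin n))} => true)
      (fun _ => false) := by
    refine Or.inr ⟨⟨ℓ, Finset.mem_singleton_self ℓ⟩, rfl, ?_⟩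
    funext i
    have hi : i = ⟨ℓ, Finset.mem_singleton_self ℓ⟩ :=
      Subtype.ext (Finset.mem_singleton.mp i.2)
    rw [hi, Function.update_self]
  obtain ⟨κ', hpos, hmu, hnu, hsupp⟩ :=
    hSCP {ℓ} (fun _ => true) (fun _ => false) (hW1 ▸ hZ1pos) (hW0 ▸ hZ0pos) hcov
  refine ⟨fun p => if p.1 ℓ = false ∧ p.2 ℓ = true then
      κ' (SCPaux.resFun ℓ p.1, SCPaux.resFun ℓ p.2) else 0, ?_, ?_, ?_, ?_⟩
  · intro p
    by_cases h : p.1 ℓ = false ∧ p.2 ℓ = true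
    · simpa [h] using hpos _
    · simp [h]
  · intro X
    have hsum : ∀ f : (Fin n → Bool) → ℝ,
        ∑ Y, f Y = ∑ w, f (SCPaux.extFun ℓ true w) + ∑ w, f (SCPaux.extFun ℓ false w) := by
      intro f
      rw [← Equiv.sum_comp (SCPaux.splitEquiv ℓ) f, Fintype.sum_prod_type,
        Fintype.sum_bool]
      rfl
    rw [hsum]
    by_cases hX : X ℓ = false
    · have h1 : ∀ w, (if X ℓ = false ∧ SCPaux.extFun ℓ true w ℓ = true then
          κ' (SCPaux.resFun ℓ X, SCPaux.resFun ℓ (SCPaux.extFun ℓ true w)) else 0)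
          = κ' (SCPaux.resFun ℓ X, w) := by
        intro w
        rw [if_pos ⟨hX, SCPaux.extFun_self ℓ true w⟩, SCPaux.res_ext]
      have h0 : ∀ w, (if X ℓ = false ∧ SCPaux.extFun ℓ false w ℓ = true then
          κ' (SCPaux.resFun ℓ X, SCPaux.resFun ℓ (SCPaux.extFun ℓ false w)) else 0)
          = 0 := by
        intro w
        rw [if_neg]
        rintro ⟨-, h⟩
        rw [SCPaux.extFun_self] at h
        exact Bool.noConfusion h
      simp only [h1, h0, Finset.sum_const_zero, add_zero]
      rw [hmu (SCPaux.resFun ℓ X), SCPaux.condLaw_eval π ℓ false X hX, hW0, if_pos hX]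
    · have hz : ∀ w b, (if X ℓ = false ∧ SCPaux.extFun ℓ b w ℓ = true then
          κ' (SCPaux.resFun ℓ X, SCPaux.resFun ℓ (SCPaux.extFun ℓ b w)) else 0) = 0 := by
        intro w b
        rw [if_neg]
        rintro ⟨h, -⟩
        exact hX h
      simp only [hz, Finset.sum_const_zero, add_zero, if_neg hX, zero_div]
  · intro Y
    have hsum : ∀ f : (Fin n → Bool) → ℝ,
        ∑ X, f X = ∑ w, f (SCPaux.extFun ℓ true w) + ∑ w, f (SCPaux.extFun ℓ false w) := by
      intro f
      rw [← Equiv.sum_comp (SCPaux.splitEquiv ℓ) f, Fintype.sum_prod_type,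
        Fintype.sum_bool]
      rfl
    rw [hsum]
    by_cases hY : Y ℓ = true
    · have h1 : ∀ w, (if SCPaux.extFun ℓ false w ℓ = false ∧ Y ℓ = true then
          κ' (SCPaux.resFun ℓ (SCPaux.extFun ℓ false w), SCPaux.resFun ℓ Y) else 0)
          = κ' (w, SCPaux.resFun ℓ Y) := by
        intro w
        rw [if_pos ⟨SCPaux.extFun_self ℓ false w, hY⟩, SCPaux.res_ext]
      have h0 : ∀ w, (if SCPaux.extFun ℓ true w ℓ = false ∧ Y ℓ = true then
          κ' (SCPaux.resFun ℓ (SCPaux.extFun ℓ true w), SCPaux.resFun ℓ Y) else 0)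
          = 0 := by
        intro w
        rw [if_neg]
        rintro ⟨h, -⟩
        rw [SCPaux.extFun_self] at h
        exact Bool.noConfusion h
      simp only [h1, h0, Finset.sum_const_zero, zero_add]
      rw [hnu (SCPaux.resFun ℓ Y), SCPaux.condLaw_eval π ℓ true Y hY, hW1, if_pos hY]
    · have hz : ∀ w b, (if SCPaux.extFun ℓ b w ℓ = false ∧ Y ℓ = true then
          κ' (SCPaux.resFun ℓ (SCPaux.extFun ℓ b w), SCPaux.resFun ℓ Y) else 0) = 0 := by
        intro w b
        rw [if_neg]
        rintro ⟨-, h⟩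
        exact hY h
      simp only [hz, Finset.sum_const_zero, add_zero, if_neg hY, zero_div]
  · intro X Y hne
    by_cases h : X ℓ = false ∧ Y ℓ = true
    swap
    · exact absurd (by simp [h]) hne
    obtain ⟨hX, hY⟩ := h
    refine ⟨hX, hY, ?_⟩
    have hne' : κ' (SCPaux.resFun ℓ X, SCPaux.resFun ℓ Y) ≠ 0 := by
      simpa [hX, hY] using hne
    have hc := hsupp _ hne'
    dsimp only at hc
    rcases hc with heq | ⟨i, hifalse, hupd⟩
    · -- flip at ℓ
      left
      refine ⟨ℓ, hX, ?_⟩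
      funext m
      by_cases hm : m = ℓ
      · subst hm; rw [Function.update_self, hY]
      · rw [Function.update_of_ne hm]
        have hmem : m ∉ ({ℓ} : Finset (Fin n)) := by
          simp [Finset.mem_singleton, hm]
        exact (congrFun heq ⟨m, hmem⟩).symm
    · -- swap : Y = X + e_ℓ - e_{i}
      right
      have hiℓ : i.1 ≠ ℓ := fun he => i.2 (by simp [he])
      refine ⟨ℓ, i.1, fun he => hiℓ he.symm, hX, ?_, ?_⟩
      · have := congrFun hupd i
        rw [Function.update_self] at this
        exact this
      · funext m
        by_cases hmi : m = i.1
        · subst hmi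
          rw [Function.update_self]
          exact hifalse
        · rw [Function.update_of_ne hmi]
          by_cases hm : m = ℓ
          · subst hm
            rw [Function.update_self, hY]
          · rw [Function.update_of_ne hm]
            have hmem : m ∉ ({ℓ} : Finset (Fin n)) := by
              simp [Finset.mem_singleton, hm]
            have h2 := congrFun hupd ⟨m, hmem⟩
            have hne2 : (⟨m, hmem⟩ : {i : Fin n // i ∉ ({ℓ} : Finset (Fin n))}) ≠ i :=
              fun he => hmi (congrArg Subtype.val he)
            rw [Function.update_of_ne hne2] at h2
            exact h2.symm
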